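/- Fix positive integers K, Q, D, n, a Borel probability measure P on ℝ^n, a Borel-measurable cost d_x : ℝ^n → ℝ^n → ℝ≥0∞, and λ > 0. For a codebook e : Fin K → ℝ^D let VQ_e : ℝ^D → Fin K send z to the least index k minimizing ‖z − e k‖, acting coordinatewise on (ℝ^D)^Q, and let f_dz(z, z') = (1/Q) ∑_{q} ‖z^q − z'^q‖ on (ℝ^D)^Q. Then the infimum, over codebooks e : Fin K → ℝ^D, decoders f : (Fin K)^Q → ℝ^n, and Borel-measurable discrete encoders T̄ : ℝ^n → (Fin K)^Q, of ∫ d_x(f (T̄ x), x) dP(x), equals the infimum, over codebooks e, decoders f, Borel-measurable continuous encoders T : ℝ^n → (ℝ^D)^Q, and Borel probability measures γ on (ℝ^D)^Q supported on the finite set of codeword tuples {e k : k ∈ Fin K}^Q, of ∫ d_x(f (VQ_e (T x)), x) dP(x) + λ · W_{f_dz}(T#P, γ). -/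

import Mathlib

open MeasureTheory ProbabilityTheory ENNReal

/-- Kantorovich cost `W_c(μ, ν)`: the infimum of `∫ c(x, y) dπ(x, y)` over all
probability measures `π` on the product whose first marginal is `μ` and whose
second marginal is `ν`. -/
noncomputable def Wcost {X Y : Type*} [MeasurableSpace X] [MeasurableSpace Y]
    (c : X → Y → ℝ≥0∞) (μ : Measure X) (ν : Measure Y) : ℝ≥0∞ :=
  ⨅ (π : Measure (X × Y)) (_ : IsProbabilityMeasure π)
    (_ : π.fst = μ) (_ : π.snd = ν), ∫⁻ p, c p.1 p.2 ∂π

/-- The nearest-codeword quantizer index `VQ_e`: the least index `k` minimizing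
`‖z − e k‖`. -/
noncomputable def nearestIdx {K D : ℕ} [NeZero K]
    (e : Fin K → EuclideanSpace ℝ (Fin D)) (z : EuclideanSpace ℝ (Fin D)) : Fin K :=
  (Finset.univ.filter (fun k => ∀ j, ‖z - e k‖ ≤ ‖z - e j‖)).min' (by
    obtain ⟨k, -, hk⟩ := Finset.exists_min_image Finset.univ (fun k => ‖z - e k‖)
      ⟨0, Finset.mem_univ _⟩
    exact ⟨k, Finset.mem_filter.mpr ⟨Finset.mem_univ _, fun j => hk j (Finset.mem_univ _)⟩⟩)

/-- The latent cost `f_dz(z, z') = (1/Q) ∑ q, ‖z q − z' q‖` on `(ℝ^D)^Q`,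
valued in `ℝ≥0∞`. -/
noncomputable def fdz {Q D : ℕ} (z z' : Fin Q → EuclideanSpace ℝ (Fin D)) : ℝ≥0∞ :=
  (∑ q, ENNReal.ofReal ‖z q - z' q‖) / (Q : ℝ≥0∞)

/-- **Theorem 2 of the paper (reconstruction-distortion form)**: the optimal expected
distortion over codebooks `e`, decoders `f` and Borel-measurable deterministic discrete
encoders `T̄ : ℝ^n → (Fin K)^Q` equals, for every `λ > 0`, the optimal value over
codebooks `e`, decoders `f`, Borel-measurable continuous encoders `T : ℝ^n → (ℝ^D)^Q`,
and probability measures `γ` on `(ℝ^D)^Q` supported on codeword tuples, of the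
distortion after vector quantization plus `λ` times the Wasserstein regularizer
`W_{f_dz}(T#P, γ)`. -/

lemma nearestIdx_eq_iff {K D : ℕ} [NeZero K] (e : Fin K → EuclideanSpace ℝ (Fin D))
    (z : EuclideanSpace ℝ (Fin D)) (k : Fin K) :
    nearestIdx e z = k ↔ (∀ j, ‖z - e k‖ ≤ ‖z - e j‖) ∧
      ∀ j, (∀ i, ‖z - e j‖ ≤ ‖z - e i‖) → k ≤ j := by
  unfold nearestIdx
  constructor
  · rintro rfl
    refine ⟨?_, ?_⟩
    · have h := Finset.min'_mem (Finset.univ.filter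
        (fun k => ∀ j, ‖z - e k‖ ≤ ‖z - e j‖)) (by
          obtain ⟨k, -, hk⟩ := Finset.exists_min_image Finset.univ (fun k => ‖z - e k‖)
            ⟨0, Finset.mem_univ _⟩
          exact ⟨k, Finset.mem_filter.mpr ⟨Finset.mem_univ _, fun j => hk j (Finset.mem_univ _)⟩⟩)
      exact (Finset.mem_filter.mp h).2
    · intro j hj
      exact Finset.min'_le _ _ (Finset.mem_filter.mpr ⟨Finset.mem_univ _, hj⟩)
  · rintro ⟨hk, hmin⟩
    apply le_antisymm
    · exact Finset.min'_le _ _ (Finset.mem_filter.mpr ⟨Finset.mem_univ _, hk⟩)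
    · apply Finset.le_min'
      intro y hy
      exact hmin y (Finset.mem_filter.mp hy).2

lemma measurable_nearestIdx {K D : ℕ} [NeZero K] (e : Fin K → EuclideanSpace ℝ (Fin D)) :
    Measurable (nearestIdx e) := by
  apply measurable_to_countable'
  intro k
  have hA : ∀ j : Fin K,
      MeasurableSet {z : EuclideanSpace ℝ (Fin D) | ∀ i, ‖z - e j‖ ≤ ‖z - e i‖} := by
    intro j
    have h : {z : EuclideanSpace ℝ (Fin D) | ∀ i, ‖z - e j‖ ≤ ‖z - e i‖}
        = ⋂ i, {z | ‖z - e j‖ ≤ ‖z - e i‖} := by ext z; simp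
    rw [h]
    exact MeasurableSet.iInter fun i =>
      (isClosed_le ((continuous_id.sub continuous_const).norm)
        ((continuous_id.sub continuous_const).norm)).measurableSet
  have h : nearestIdx e ⁻¹' {k} = {z : EuclideanSpace ℝ (Fin D) | ∀ i, ‖z - e k‖ ≤ ‖z - e i‖} ∩
      ⋂ j, {z | (∀ i, ‖z - e j‖ ≤ ‖z - e i‖) → k ≤ j} := by
    ext z
    simp only [Set.mem_preimage, Set.mem_singleton_iff, nearestIdx_eq_iff, Set.mem_inter_iff,
      Set.mem_iInter, Set.mem_setOf_eq]
  rw [h]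
  refine (hA k).inter (MeasurableSet.iInter fun j => ?_)
  by_cases hkj : k ≤ j
  · have h2 : {z : EuclideanSpace ℝ (Fin D) | (∀ i, ‖z - e j‖ ≤ ‖z - e i‖) → k ≤ j}
        = Set.univ := by
      ext z; simp [hkj]
    rw [h2]; exact MeasurableSet.univ
  · have h2 : {z : EuclideanSpace ℝ (Fin D) | (∀ i, ‖z - e j‖ ≤ ‖z - e i‖) → k ≤ j}
        = {z : EuclideanSpace ℝ (Fin D) | ∀ i, ‖z - e j‖ ≤ ‖z - e i‖}ᶜ := by
      ext z; simp [hkj]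
    rw [h2]; exact (hA j).compl

lemma nearestIdx_apply_self {K D : ℕ} [NeZero K] {e : Fin K → EuclideanSpace ℝ (Fin D)}
    (he : Function.Injective e) (k : Fin K) : nearestIdx e (e k) = k := by
  rw [nearestIdx_eq_iff]
  refine ⟨fun j => by simp [norm_nonneg], fun j hj => ?_⟩
  have h1 : ‖e k - e j‖ ≤ 0 := by simpa using hj k
  have h2 : e k = e j := by
    have := le_antisymm h1 (norm_nonneg _)
    rw [norm_eq_zero, sub_eq_zero] at this
    exact this
  exact le_of_eq (he h2)

lemma Wcost_fdz_self {Q D : ℕ} (μ : Measure (Fin Q → EuclideanSpace ℝ (Fin D)))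
    [IsProbabilityMeasure μ] : Wcost fdz μ μ = 0 := by
  apply le_antisymm _ (zero_le)
  have hdiag : Measurable fun z : Fin Q → EuclideanSpace ℝ (Fin D) => (z, z) :=
    measurable_id.prodMk measurable_id
  have hfdz : Measurable (fun p : (Fin Q → EuclideanSpace ℝ (Fin D)) ×
      (Fin Q → EuclideanSpace ℝ (Fin D)) => fdz p.1 p.2) := by
    unfold fdz
    apply Measurable.div_const
    apply Finset.measurable_sum
    intro q _
    exact (((measurable_pi_apply q).comp measurable_fst).sub
      ((measurable_pi_apply q).comp measurable_snd)).norm.ennreal_ofReal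
  have hπ : IsProbabilityMeasure (μ.map fun z => (z, z)) :=
    Measure.isProbabilityMeasure_map hdiag.aemeasurable
  have hfst : (μ.map fun z => (z, z)).fst = μ := by
    unfold Measure.fst
    rw [Measure.map_map measurable_fst hdiag]
    exact Measure.map_id
  have hsnd : (μ.map fun z => (z, z)).snd = μ := by
    unfold Measure.snd
    rw [Measure.map_map measurable_snd hdiag]
    exact Measure.map_id
  have hint : ∫⁻ p, fdz p.1 p.2 ∂(μ.map fun z => (z, z)) = 0 := by
    rw [lintegral_map hfdz hdiag]
    simp [fdz]
  calc Wcost fdz μ μ ≤ ∫⁻ p, fdz p.1 p.2 ∂(μ.map fun z => (z, z)) :=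
        iInf_le_of_le _ (iInf_le_of_le hπ (iInf_le_of_le hfst (iInf_le_of_le hsnd le_rfl)))
    _ = 0 := hint


theorem stmt5 {K Q D n : ℕ} [NeZero K] (hQ : 0 < Q) (hD : 0 < D) (hn : 0 < n)
    (P : Measure (EuclideanSpace ℝ (Fin n))) [IsProbabilityMeasure P]
    (dx : EuclideanSpace ℝ (Fin n) → EuclideanSpace ℝ (Fin n) → ℝ≥0∞)
    (hdx : Measurable (Function.uncurry dx))
    (lam : ℝ) (hlam : 0 < lam) :
    (⨅ (e : Fin K → EuclideanSpace ℝ (Fin D))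
       (f : (Fin Q → Fin K) → EuclideanSpace ℝ (Fin n))
       (T : EuclideanSpace ℝ (Fin n) → (Fin Q → Fin K)) (_ : Measurable T),
       ∫⁻ x, dx (f (T x)) x ∂P)
    = ⨅ (e : Fin K → EuclideanSpace ℝ (Fin D))
        (f : (Fin Q → Fin K) → EuclideanSpace ℝ (Fin n))
        (T : EuclideanSpace ℝ (Fin n) → (Fin Q → EuclideanSpace ℝ (Fin D)))
        (_ : Measurable T)
        (γ : Measure (Fin Q → EuclideanSpace ℝ (Fin D)))
        (_ : IsProbabilityMeasure γ)
        (_ : γ {z | ∀ q, ∃ k, z q = e k} = 1),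
        (∫⁻ x, dx (f (fun q => nearestIdx e (T x q))) x ∂P)
          + ENNReal.ofReal lam * Wcost fdz (P.map T) γ := by
  apply le_antisymm
  · refine le_iInf fun e => le_iInf fun f => le_iInf fun T => le_iInf fun hT =>
      le_iInf fun γ => le_iInf fun _ => le_iInf fun _ => ?_
    have hT' : Measurable fun x => fun q => nearestIdx e (T x q) :=
      measurable_pi_lambda _ fun q =>
        (measurable_nearestIdx e).comp ((measurable_pi_apply q).comp hT)
    refine le_trans ?_ le_self_add
    exact iInf_le_of_le e (iInf_le_of_le f
      (iInf_le_of_le (fun x => fun q => nearestIdx e (T x q)) (iInf_le_of_le hT' le_rfl)))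
  · refine le_iInf fun e => le_iInf fun f => le_iInf fun T => le_iInf fun hT => ?_
    set v : EuclideanSpace ℝ (Fin D) := EuclideanSpace.single ⟨0, hD⟩ (1:ℝ) with hv
    have hv0 : v ≠ 0 := by
      intro h
      have : ‖v‖ = 1 := by simp [hv]
      rw [h] at this; simp at this
    set e' : Fin K → EuclideanSpace ℝ (Fin D) := fun k => ((k : ℕ) : ℝ) • v with he'
    have hinj : Function.Injective e' := by
      intro a b hab
      have h1 : ((a : ℕ) : ℝ) = ((b : ℕ) : ℝ) := smul_left_injective ℝ hv0 hab
      have h2 : (a : ℕ) = (b : ℕ) := Nat.cast_injective h1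
      exact Fin.val_injective h2
    have hq : ∀ k, nearestIdx e' (e' k) = k := nearestIdx_apply_self hinj
    set T' : EuclideanSpace ℝ (Fin n) → (Fin Q → EuclideanSpace ℝ (Fin D)) :=
      fun x q => e' (T x q) with hT'def
    have hT'meas : Measurable T' := measurable_pi_lambda _ fun q =>
      (measurable_from_top (f := e')).comp ((measurable_pi_apply q).comp hT)
    have hprob : IsProbabilityMeasure (P.map T') := Measure.isProbabilityMeasure_map hT'meas.aemeasurable
    have hS : MeasurableSet {z : Fin Q → EuclideanSpace ℝ (Fin D) | ∀ q, ∃ k, z q = e' k} := by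
      have h : {z : Fin Q → EuclideanSpace ℝ (Fin D) | ∀ q, ∃ k, z q = e' k}
          = ⋂ q, (fun z : Fin Q → EuclideanSpace ℝ (Fin D) => z q) ⁻¹' (Set.range e') := by
        ext z
        simp [Set.range, eq_comm]
      rw [h]
      exact MeasurableSet.iInter fun q =>
        (measurable_pi_apply q) ((Set.finite_range e').measurableSet)
    have hγ1 : (P.map T') {z | ∀ q, ∃ k, z q = e' k} = 1 := by
      rw [Measure.map_apply hT'meas hS]
      have h : T' ⁻¹' {z | ∀ q, ∃ k, z q = e' k} = Set.univ := by
        ext x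
        simp only [Set.mem_preimage, Set.mem_setOf_eq, Set.mem_univ, iff_true]
        exact fun q => ⟨T x q, rfl⟩
      rw [h]; exact measure_univ
    refine le_trans (iInf_le_of_le e' (iInf_le_of_le f (iInf_le_of_le T'
      (iInf_le_of_le hT'meas (iInf_le_of_le (P.map T') (iInf_le_of_le hprob
        (iInf_le_of_le hγ1 le_rfl))))))) (le_of_eq ?_)
    rw [Wcost_fdz_self, mul_zero, add_zero]
    refine lintegral_congr fun x => ?_
    have h : (fun q => nearestIdx e' (T' x q)) = T x := funext fun q => hq _
    rw [h]
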